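/- arXiv:2506.04927 — 2 statements merged into one kernel-verified Lean document; each statement's English description precedes it below -/
import Mathlib

section
/- Let e : [0,T] → ℝ be integrable with ē = 0, θ : ℝ → ℝ continuous and c ∈ ℝ. Then every solution u with ū = 0 of the periodic problem (φ_{p(t)}(u'(t)))' + θ(c + u(t))u'(t) = e(t) on [0,T], u(0) − u(T) = 0 = u'(0) − u'(T), satisfies ∫₀ᵀ |u'(t)|^{p(t)} dt ≤ ‖e‖_{L¹} ‖u‖_∞ and ∫₀ᵀ |u'(t)|^{p_-} dt ≤ T + ‖e‖_{L¹} ‖u‖_∞. -/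
open Set MeasureTheory

set_option maxHeartbeats 1000000

/-- `φ_q(x) = |x|^{q-2} x` (with `φ_q(0) = 0`, automatic since `0 ^ y * 0 = 0`). -/
noncomputable def phi (q x : ℝ) : ℝ := |x| ^ (q - 2) * x

/-- sup-norm of `v` on `[0,T]`. -/
noncomputable def supNorm (T : ℝ) (v : ℝ → ℝ) : ℝ := sSup ((fun t => |v t|) '' Set.Icc 0 T)

/-- mean value `v̄ = (1/T) ∫₀ᵀ v`. -/
noncomputable def meanVal (T : ℝ) (v : ℝ → ℝ) : ℝ := (1 / T) * ∫ t in (0:ℝ)..T, v t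

/-- `v` (with derivative `v'`) is C¹ on `[0,T]`. -/
def IsC1On (T : ℝ) (v v' : ℝ → ℝ) : Prop :=
  (∀ t ∈ Set.Icc 0 T, HasDerivWithinAt v (v' t) (Set.Icc 0 T) t) ∧
    ContinuousOn v' (Set.Icc 0 T)

/-- solution of the periodic problem `(φ_{p(t)}(u'))' = F(t)` a.e. on `[0,T]`:
`u` is C¹, satisfies the periodic boundary conditions, and
`w(t) = φ_{p(t)}(u'(t))` is absolutely continuous with a.e. derivative the integrable `F`. -/
def IsAESol (T : ℝ) (p F u u' : ℝ → ℝ) : Prop :=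
  IsC1On T u u' ∧ u 0 = u T ∧ u' 0 = u' T ∧
    MeasureTheory.IntegrableOn F (Set.Icc 0 T) ∧
    ∀ t ∈ Set.Icc 0 T,
      phi (p t) (u' t) = phi (p 0) (u' 0) + ∫ s in (0:ℝ)..t, F s

lemma phi_mul_self {q x : ℝ} (hq : 0 < q) : phi q x * x = |x| ^ q := by
  rcases eq_or_ne x 0 with rfl | hx
  · simp [phi, Real.zero_rpow hq.ne']
  · have hax : 0 < |x| := abs_pos.2 hx
    have h2 : x * x = |x| ^ (2:ℝ) := by
      rw [show (2:ℝ) = ((2:ℕ):ℝ) by norm_num, Real.rpow_natCast, sq_abs, sq]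
    calc phi q x * x = |x| ^ (q-2) * (x * x) := by rw [phi]; ring
      _ = |x| ^ (q-2) * |x| ^ (2:ℝ) := by rw [h2]
      _ = |x| ^ (q - 2 + 2) := (Real.rpow_add hax _ _).symm
      _ = |x| ^ q := by ring_nf

lemma ftc_icc {T : ℝ} {φ φ' : ℝ → ℝ}
    (hd : ∀ t ∈ Set.Icc 0 T, HasDerivWithinAt φ (φ' t) (Set.Icc 0 T) t)
    (hc : ContinuousOn φ' (Set.Icc 0 T))
    {a b : ℝ} (ha : 0 ≤ a) (hab : a ≤ b) (hb : b ≤ T) :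
    ∫ t in a..b, φ' t = φ b - φ a := by
  have hsub : Set.Icc a b ⊆ Set.Icc 0 T := Set.Icc_subset_Icc ha hb
  apply intervalIntegral.integral_eq_sub_of_hasDeriv_right_of_le hab
  · exact fun x hx => ((hd x (hsub hx)).continuousWithinAt).mono hsub
  · intro x hx
    exact (hd x (hsub (Set.Ioo_subset_Icc_self hx))).mono_of_mem_nhdsWithin
      (mem_nhdsWithin_of_mem_nhds (Icc_mem_nhds (lt_of_le_of_lt ha hx.1) (lt_of_lt_of_le hx.2 hb)))
  · apply ContinuousOn.intervalIntegrable
    rw [Set.uIcc_of_le hab]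
    exact hc.mono hsub

lemma parts {T : ℝ} (hT : 0 < T) (F φ φ' : ℝ → ℝ)
    (hF : MeasureTheory.IntegrableOn F (Set.Icc 0 T))
    (hd : ∀ t ∈ Set.Icc 0 T, HasDerivWithinAt φ (φ' t) (Set.Icc 0 T) t)
    (hc : ContinuousOn φ' (Set.Icc 0 T)) :
    ∫ t in (0:ℝ)..T, (∫ s in (0:ℝ)..t, F s) * φ' t
      = (∫ s in (0:ℝ)..T, F s) * φ T - ∫ s in (0:ℝ)..T, F s * φ s := by
  have hφc : ContinuousOn φ (Set.Icc 0 T) := fun x hx => (hd x hx).continuousWithinAt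
  have hFIoc : IntegrableOn F (Set.Ioc 0 T) := hF.mono_set Set.Ioc_subset_Icc_self
  have hφ'Ioc : IntegrableOn φ' (Set.Ioc 0 T) :=
    (hc.integrableOn_Icc).mono_set Set.Ioc_subset_Icc_self
  set μ := volume.restrict (Set.Ioc (0:ℝ) T) with hμ
  set ind : ℝ × ℝ → ℝ := ({q : ℝ × ℝ | q.1 ≤ q.2}.indicator fun q => F q.1 * φ' q.2) with hind
  have hS : MeasurableSet {q : ℝ × ℝ | q.1 ≤ q.2} := measurableSet_le measurable_fst measurable_snd
  have hg : Integrable (fun q : ℝ × ℝ => F q.1 * φ' q.2) (μ.prod μ) :=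
    Integrable.mul_prod hFIoc hφ'Ioc
  have hfint : Integrable ind (μ.prod μ) := hg.indicator hS
  have key1 : ∀ t ∈ Set.Ioc (0:ℝ) T,
      (∫ s in (0:ℝ)..t, F s) * φ' t = ∫ s, ind (s, t) ∂μ := by
    intro t ht
    have h1 : ∀ s : ℝ, ind (s, t) = (Set.Iic t).indicator (fun s => F s * φ' t) s := by
      intro s; by_cases h : s ≤ t <;> simp [hind, Set.indicator, h]
    calc (∫ s in (0:ℝ)..t, F s) * φ' t
        = (∫ s in Set.Ioc (0:ℝ) t, F s) * φ' t := by
          rw [intervalIntegral.integral_of_le ht.1.le]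
      _ = ∫ s in Set.Ioc (0:ℝ) t, F s * φ' t := (integral_mul_const _ _).symm
      _ = ∫ s, (Set.Iic t).indicator (fun s => F s * φ' t) s ∂μ := by
          rw [integral_indicator measurableSet_Iic, hμ,
            Measure.restrict_restrict measurableSet_Iic, Set.inter_comm, Set.Ioc_inter_Iic,
            min_eq_right ht.2]
      _ = ∫ s, ind (s, t) ∂μ := by simp_rw [h1]
  have key2 : ∀ s ∈ Set.Ioc (0:ℝ) T, (∫ t, ind (s, t) ∂μ) = F s * (φ T - φ s) := by
    intro s hs
    have h1 : ∀ t : ℝ, ind (s, t) = (Set.Ici s).indicator (fun t => F s * φ' t) t := by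
      intro t; by_cases h : s ≤ t <;> simp [hind, Set.indicator, h]
    have hset : Set.Ici s ∩ Set.Ioc 0 T = Set.Icc s T := by
      ext x
      simp only [Set.mem_inter_iff, Set.mem_Ici, Set.mem_Ioc, Set.mem_Icc]
      constructor
      · rintro ⟨h1, _, h3⟩; exact ⟨h1, h3⟩
      · rintro ⟨h1, h2⟩; exact ⟨h1, lt_of_lt_of_le hs.1 h1, h2⟩
    calc (∫ t, ind (s, t) ∂μ)
        = ∫ t, (Set.Ici s).indicator (fun t => F s * φ' t) t ∂μ := by simp_rw [h1]
      _ = ∫ t in Set.Icc s T, F s * φ' t := by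
          rw [integral_indicator measurableSet_Ici, hμ,
            Measure.restrict_restrict measurableSet_Ici, hset]
      _ = F s * ∫ t in Set.Icc s T, φ' t := integral_const_mul _ _
      _ = F s * ∫ t in s..T, φ' t := by
          rw [MeasureTheory.integral_Icc_eq_integral_Ioc,
            intervalIntegral.integral_of_le hs.2]
      _ = F s * (φ T - φ s) := by rw [ftc_icc hd hc hs.1.le hs.2 le_rfl]
  have hswap : (∫ t, (∫ s, ind (s, t) ∂μ) ∂μ) = ∫ s, (∫ t, ind (s, t) ∂μ) ∂μ := by
    exact MeasureTheory.integral_integral_swap (f := fun t s => ind (s, t)) hfint.swap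
  have hFφ : IntegrableOn (fun s => F s * φ s) (Set.Ioc 0 T) := by
    have hFii : IntervalIntegrable F volume 0 T := by
      apply IntegrableOn.intervalIntegrable
      rwa [Set.uIcc_of_le hT.le]
    have hφuIcc : ContinuousOn φ (Set.uIcc 0 T) := by rwa [Set.uIcc_of_le hT.le]
    exact (hFii.mul_continuousOn hφuIcc).1
  calc ∫ t in (0:ℝ)..T, (∫ s in (0:ℝ)..t, F s) * φ' t
      = ∫ t in Set.Ioc (0:ℝ) T, (∫ s in (0:ℝ)..t, F s) * φ' t := by
        rw [intervalIntegral.integral_of_le hT.le]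
    _ = ∫ t, (∫ s, ind (s, t) ∂μ) ∂μ :=
        setIntegral_congr_fun measurableSet_Ioc key1
    _ = ∫ s, (∫ t, ind (s, t) ∂μ) ∂μ := hswap
    _ = ∫ s in Set.Ioc (0:ℝ) T, F s * (φ T - φ s) :=
        setIntegral_congr_fun measurableSet_Ioc key2
    _ = (∫ s in Set.Ioc (0:ℝ) T, F s) * φ T - ∫ s in Set.Ioc (0:ℝ) T, F s * φ s := by
        rw [← integral_mul_const, ← integral_sub (hFIoc.mul_const _) hFφ]
        congr 1; ext s; ring
    _ = (∫ s in (0:ℝ)..T, F s) * φ T - ∫ s in (0:ℝ)..T, F s * φ s := by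
        rw [intervalIntegral.integral_of_le hT.le, intervalIntegral.integral_of_le hT.le]

theorem stmt5 (T : ℝ) (hT : 0 < T) (p : ℝ → ℝ)
    (hp : ContinuousOn p (Set.Icc 0 T)) (hp1 : ∀ t ∈ Set.Icc 0 T, 1 < p t)
    (hpT : p 0 = p T)
    (pm : ℝ) (hpm : pm = sInf (p '' Set.Icc 0 T))
    (e : ℝ → ℝ) (he : MeasureTheory.IntegrableOn e (Set.Icc 0 T))
    (hemean : meanVal T e = 0)
    (θ : ℝ → ℝ) (hθ : Continuous θ) (c : ℝ)
    (u u' : ℝ → ℝ)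
    (hu : IsAESol T p (fun t => e t - θ (c + u t) * u' t) u u')
    (humean : meanVal T u = 0) :
    (∫ t in (0:ℝ)..T, |u' t| ^ (p t)) ≤ (∫ t in (0:ℝ)..T, |e t|) * supNorm T u ∧
    (∫ t in (0:ℝ)..T, |u' t| ^ pm) ≤ T + (∫ t in (0:ℝ)..T, |e t|) * supNorm T u := by
  obtain ⟨⟨hud, hu'c⟩, hbc, hbc', hFint, hw⟩ := hu
  have h0T : (0:ℝ) ∈ Set.Icc (0:ℝ) T := ⟨le_refl 0, hT.le⟩
  have hTT : T ∈ Set.Icc (0:ℝ) T := ⟨hT.le, le_refl T⟩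
  have huc : ContinuousOn u (Set.Icc 0 T) := fun x hx => (hud x hx).continuousWithinAt
  have hucu : ContinuousOn u (Set.uIcc 0 T) := by rwa [Set.uIcc_of_le hT.le]
  have hu'cu : ContinuousOn u' (Set.uIcc 0 T) := by rwa [Set.uIcc_of_le hT.le]
  -- sup norm facts
  have hMbdd : BddAbove ((fun t => |u t|) '' Set.Icc 0 T) :=
    (isCompact_Icc.image_of_continuousOn huc.abs).bddAbove
  have hM : ∀ t ∈ Set.Icc (0:ℝ) T, |u t| ≤ supNorm T u := fun t ht => le_csSup hMbdd ⟨t, ht, rfl⟩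
  have hM0 : (0:ℝ) ≤ supNorm T u := le_trans (abs_nonneg _) (hM 0 h0T)
  have heii : IntervalIntegrable e volume 0 T := by
    apply IntegrableOn.intervalIntegrable; rwa [Set.uIcc_of_le hT.le]
  set F : ℝ → ℝ := fun t => e t - θ (c + u t) * u' t with hFdef
  have hVT : (∫ s in (0:ℝ)..T, F s) = 0 := by
    have h1 := hw T hTT
    rw [← hbc', ← hpT] at h1
    linarith
  -- theta term vanishes
  have hff' : ∀ x ∈ Set.Ioo (min 0 T) (max 0 T), HasDerivWithinAt u (u' x) (Set.Ioi x) x := by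
    intro x hx
    rw [min_eq_left hT.le, max_eq_right hT.le] at hx
    exact (hud x (Set.Ioo_subset_Icc_self hx)).mono_of_mem_nhdsWithin
      (mem_nhdsWithin_of_mem_nhds (Icc_mem_nhds hx.1 hx.2))
  have hθint : (∫ t in (0:ℝ)..T, θ (c + u t) * u' t * u t) = 0 := by
    have hgc : Continuous (fun x : ℝ => θ (c + x) * x) :=
      (hθ.comp (continuous_const.add continuous_id)).mul continuous_id
    have hcomp := intervalIntegral.integral_comp_smul_deriv'' (f := u) (f' := u')
      (g := fun x => θ (c + x) * x) hucu hff' hu'cu (hgc.continuousOn)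
    rw [hbc, intervalIntegral.integral_same] at hcomp
    calc (∫ t in (0:ℝ)..T, θ (c + u t) * u' t * u t)
        = ∫ x in (0:ℝ)..T, u' x • ((fun x => θ (c + x) * x) ∘ u) x := by
          apply intervalIntegral.integral_congr
          intro x _
          simp only [Function.comp_apply, smul_eq_mul]
          ring
      _ = 0 := hcomp
  -- the main identity
  have hVcont : ContinuousOn (fun t => ∫ s in (0:ℝ)..t, F s) (Set.Icc 0 T) := by
    have h := intervalIntegral.continuousOn_primitive_interval (a := (0:ℝ)) (b := T) (f := F)
      (μ := volume) (by rwa [Set.uIcc_of_le hT.le])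
    rwa [Set.uIcc_of_le hT.le] at h
  have hVcontu : ContinuousOn (fun t => ∫ s in (0:ℝ)..t, F s) (Set.uIcc 0 T) := by
    rwa [Set.uIcc_of_le hT.le]
  have hii1 : IntervalIntegrable (fun t => phi (p 0) (u' 0) * u' t) volume 0 T :=
    (continuousOn_const.mul hu'cu).intervalIntegrable
  have hii2 : IntervalIntegrable (fun t => (∫ s in (0:ℝ)..t, F s) * u' t) volume 0 T :=
    (hVcontu.mul hu'cu).intervalIntegrable
  have heuii : IntervalIntegrable (fun t => e t * u t) volume 0 T :=
    heii.mul_continuousOn hucu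
  have hθuii : IntervalIntegrable (fun t => θ (c + u t) * u' t * u t) volume 0 T := by
    apply ContinuousOn.intervalIntegrable
    exact (((hθ.comp_continuousOn (continuousOn_const.add hucu)).mul hu'cu).mul hucu)
  have hmain : (∫ t in (0:ℝ)..T, |u' t| ^ (p t)) = -∫ t in (0:ℝ)..T, e t * u t := by
    have step1 : (∫ t in (0:ℝ)..T, |u' t| ^ (p t))
        = ∫ t in (0:ℝ)..T, (phi (p 0) (u' 0) * u' t + (∫ s in (0:ℝ)..t, F s) * u' t) := by
      apply intervalIntegral.integral_congr
      intro t ht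
      rw [Set.uIcc_of_le hT.le] at ht
      show |u' t| ^ (p t) = _
      rw [← phi_mul_self (q := p t) (x := u' t) (lt_trans one_pos (hp1 t ht)), hw t ht]
      ring
    have step4 : (∫ t in (0:ℝ)..T, F t * u t) = ∫ t in (0:ℝ)..T, e t * u t := by
      have h1 : (∫ t in (0:ℝ)..T, F t * u t)
          = ∫ t in (0:ℝ)..T, (e t * u t - θ (c + u t) * u' t * u t) := by
        apply intervalIntegral.integral_congr
        intro t _
        simp only [hFdef]
        ring
      rw [h1, intervalIntegral.integral_sub heuii hθuii, hθint, sub_zero]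
    calc (∫ t in (0:ℝ)..T, |u' t| ^ (p t))
        = ∫ t in (0:ℝ)..T, (phi (p 0) (u' 0) * u' t + (∫ s in (0:ℝ)..t, F s) * u' t) := step1
      _ = phi (p 0) (u' 0) * (∫ t in (0:ℝ)..T, u' t)
            + ∫ t in (0:ℝ)..T, (∫ s in (0:ℝ)..t, F s) * u' t := by
          rw [intervalIntegral.integral_add hii1 hii2, intervalIntegral.integral_const_mul]
      _ = ∫ t in (0:ℝ)..T, (∫ s in (0:ℝ)..t, F s) * u' t := by
          rw [ftc_icc hud hu'c le_rfl hT.le le_rfl, hbc]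
          ring_nf
      _ = (∫ s in (0:ℝ)..T, F s) * u T - ∫ s in (0:ℝ)..T, F s * u s :=
          parts hT F u u' hFint hud hu'c
      _ = -∫ t in (0:ℝ)..T, F t * u t := by rw [hVT]; ring
      _ = -∫ t in (0:ℝ)..T, e t * u t := by rw [step4]
  -- first inequality
  have habs : |∫ t in (0:ℝ)..T, e t * u t| ≤ ∫ t in (0:ℝ)..T, |e t * u t| :=
    intervalIntegral.abs_integral_le_integral_abs hT.le
  have hmono : (∫ t in (0:ℝ)..T, |e t * u t|) ≤ ∫ t in (0:ℝ)..T, |e t| * supNorm T u := by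
    apply intervalIntegral.integral_mono_on hT.le heuii.abs (heii.abs.mul_const _)
    intro t ht
    rw [abs_mul]
    exact mul_le_mul_of_nonneg_left (hM t ht) (abs_nonneg _)
  have hconst : (∫ t in (0:ℝ)..T, |e t| * supNorm T u)
      = (∫ t in (0:ℝ)..T, |e t|) * supNorm T u := intervalIntegral.integral_mul_const _ _
  have first : (∫ t in (0:ℝ)..T, |u' t| ^ (p t)) ≤ (∫ t in (0:ℝ)..T, |e t|) * supNorm T u := by
    rw [hmain]
    have := neg_le_abs (∫ t in (0:ℝ)..T, e t * u t)
    linarith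
  refine ⟨first, ?_⟩
  -- second inequality
  have himg : (p '' Set.Icc 0 T).Nonempty := ⟨p 0, 0, h0T, rfl⟩
  have hbddB : BddBelow (p '' Set.Icc 0 T) :=
    (isCompact_Icc.image_of_continuousOn hp).bddBelow
  have hpm1 : (1:ℝ) ≤ pm := by
    rw [hpm]
    apply le_csInf himg
    rintro b ⟨x, hx, rfl⟩
    exact (hp1 x hx).le
  have hpmle : ∀ t ∈ Set.Icc (0:ℝ) T, pm ≤ p t := fun t ht => by
    rw [hpm]; exact csInf_le hbddB ⟨t, ht, rfl⟩
  have hpw : ∀ t ∈ Set.Icc (0:ℝ) T, |u' t| ^ pm ≤ 1 + |u' t| ^ (p t) := by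
    intro t ht
    have h0 : (0:ℝ) ≤ |u' t| := abs_nonneg _
    rcases le_total (|u' t|) 1 with h | h
    · have h1 := Real.rpow_le_one h0 h (by linarith : (0:ℝ) ≤ pm)
      have h2 := Real.rpow_nonneg h0 (p t)
      linarith
    · have h1 := Real.rpow_le_rpow_of_exponent_le h (hpmle t ht)
      linarith
  have hc1 : ContinuousOn (fun t => |u' t| ^ pm) (Set.uIcc 0 T) := by
    rw [Set.uIcc_of_le hT.le]
    exact (hu'c.abs).rpow_const (fun x _ => Or.inr (by linarith))
  have hc2 : ContinuousOn (fun t => |u' t| ^ (p t)) (Set.uIcc 0 T) := by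
    rw [Set.uIcc_of_le hT.le]
    exact (hu'c.abs).rpow hp (fun x hx => Or.inr (lt_trans one_pos (hp1 x hx)))
  have hi1 : IntervalIntegrable (fun t => |u' t| ^ pm) volume 0 T := hc1.intervalIntegrable
  have hi2 : IntervalIntegrable (fun t => |u' t| ^ (p t)) volume 0 T := hc2.intervalIntegrable
  calc (∫ t in (0:ℝ)..T, |u' t| ^ pm)
      ≤ ∫ t in (0:ℝ)..T, (1 + |u' t| ^ (p t)) := by
        apply intervalIntegral.integral_mono_on hT.le hi1 (intervalIntegrable_const.add hi2) hpw
    _ = T + ∫ t in (0:ℝ)..T, |u' t| ^ (p t) := by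
        rw [intervalIntegral.integral_add intervalIntegrable_const hi2]
        simp
    _ ≤ T + (∫ t in (0:ℝ)..T, |e t|) * supNorm T u := by linarith
end

section
/- Let f : [0,∞) → ℝ, g : (0,∞) → ℝ, h : [0,T] → ℝ be continuous, let α be a lower solution and β an upper solution of problem (P) with α(t) ≤ β(t) for all t. Define γ(t,x) = β(t) if x > β(t), γ(t,x) = x if α(t) ≤ x ≤ β(t), γ(t,x) = α(t) if x < α(t), and ℓ*(t,x,y) = h(t) − g(γ(t,x)) − f(γ(t,x))y + x − γ(t,x). Then every C¹ function u : [0,T] → ℝ with t ↦ φ_{p(t)}(u'(t)) of class C¹ satisfying (φ_{p(t)}(u'(t)))' = ℓ*(t, u(t), u'(t)) on [0,T] together with u(0) − u(T) = 0 = u'(0) − u'(T) satisfies α(t) ≤ u(t) ≤ β(t) for all t ∈ [0,T] (and hence is a solution of (P)). -/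
open Set MeasureTheory Filter Topology Metric

/-- (classical, positive) solution of problem (P):
`(φ_{p(t)}(u'))' + f(u)u' + g(u) = h(t)` on `[0,T]`, `u(0)-u(T) = 0 = u'(0)-u'(T)`. -/
def IsSolP (T : ℝ) (p f g h u : ℝ → ℝ) : Prop :=
  ∃ u' w' : ℝ → ℝ,
    IsC1On T u u' ∧ (∀ t ∈ Set.Icc 0 T, 0 < u t) ∧
    IsC1On T (fun t => phi (p t) (u' t)) w' ∧
    u 0 = u T ∧ u' 0 = u' T ∧
    ∀ t ∈ Set.Icc 0 T, w' t + f (u t) * u' t + g (u t) = h t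

/-- lower solution of problem (P). -/
def IsLowerSol (T : ℝ) (p f g h α : ℝ → ℝ) : Prop :=
  ∃ α' w' : ℝ → ℝ,
    IsC1On T α α' ∧ (∀ t ∈ Set.Icc 0 T, 0 < α t) ∧
    IsC1On T (fun t => phi (p t) (α' t)) w' ∧
    α 0 = α T ∧ α' T ≤ α' 0 ∧
    ∀ t ∈ Set.Icc 0 T, h t ≤ w' t + f (α t) * α' t + g (α t)

/-- upper solution of problem (P). -/
def IsUpperSol (T : ℝ) (p f g h β : ℝ → ℝ) : Prop :=
  ∃ β' w' : ℝ → ℝ,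
    IsC1On T β β' ∧ (∀ t ∈ Set.Icc 0 T, 0 < β t) ∧
    IsC1On T (fun t => phi (p t) (β' t)) w' ∧
    β 0 = β T ∧ β' 0 ≤ β' T ∧
    ∀ t ∈ Set.Icc 0 T, w' t + f (β t) * β' t + g (β t) ≤ h t

lemma phi_pos {q x : ℝ} (hq : 1 < q) (hx : 0 < x) : phi q x = x ^ (q - 1) := by
  unfold phi
  rw [abs_of_pos hx, show q - 1 = q - 2 + 1 by ring, Real.rpow_add_one hx.ne']

lemma phi_zero (q : ℝ) : phi q 0 = 0 := by simp [phi]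

lemma phi_neg (q x : ℝ) : phi q (-x) = - phi q x := by simp [phi]

lemma phi_strictMono {q : ℝ} (hq : 1 < q) : StrictMono (phi q) := by
  have h1 : 0 < q - 1 := by linarith
  have key : ∀ x y : ℝ, 0 ≤ x → x < y → phi q x < phi q y := by
    intro x y hx hxy
    rcases hx.eq_or_lt with h | h
    · rw [← h, phi_zero, phi_pos hq (hx.trans_lt hxy)]
      exact Real.rpow_pos_of_pos (hx.trans_lt hxy) _
    · rw [phi_pos hq h, phi_pos hq (h.trans hxy)]
      exact Real.rpow_lt_rpow h.le hxy h1
  intro x y hxy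
  rcases le_or_gt 0 x with hx | hx
  · exact key x y hx hxy
  · rcases le_or_gt y 0 with hy | hy
    · have := key (-y) (-x) (neg_nonneg.2 hy) (by linarith)
      rw [phi_neg, phi_neg] at this; linarith
    · have h1' : phi q x < 0 := by
        have := key 0 (-x) le_rfl (by linarith)
        rw [phi_zero, phi_neg] at this; linarith
      have h2' : 0 < phi q y := by
        have := key 0 y le_rfl hy; rwa [phi_zero] at this
      linarith


lemma key (T : ℝ) (hT : 0 < T) (v v' m m' : ℝ → ℝ)
    (hv : ∀ t ∈ Icc 0 T, HasDerivWithinAt v (v' t) (Icc 0 T) t)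
    (hv'c : ContinuousOn v' (Icc 0 T))
    (hm : ∀ t ∈ Icc 0 T, HasDerivWithinAt m (m' t) (Icc 0 T) t)
    (hvper : v 0 = v T) (hv'per : v' T ≤ v' 0)
    (hsign : ∀ t ∈ Icc 0 T, m t < 0 → v' t < 0)
    (hzero : ∀ t ∈ Icc 0 T, v' t = 0 → m t = 0)
    (K : ℝ) (hK : 0 ≤ K)
    (hineq : ∀ t ∈ Icc 0 T, 0 < v t → -K * |v' t| + v t ≤ m' t) :
    ∀ t ∈ Icc 0 T, v t ≤ 0 := by
  by_contra hcon
  push_neg at hcon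
  obtain ⟨s, hs, hvs⟩ := hcon
  have hvc : ContinuousOn v (Icc 0 T) := fun t ht => (hv t ht).continuousWithinAt
  have hmc : ContinuousOn m (Icc 0 T) := fun t ht => (hm t ht).continuousWithinAt
  obtain ⟨t₁, ht₁, hmax₁⟩ := isCompact_Icc.exists_isMaxOn (nonempty_Icc.2 hT.le) hvc
  set t₀ : ℝ := if t₁ = 0 then T else t₁ with ht₀def
  have ht₀mem : t₀ ∈ Icc 0 T := by
    by_cases h : t₁ = 0 <;> simp [ht₀def, h, hT.le, ht₁, le_refl]
  have hvt₀ : v t₀ = v t₁ := by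
    by_cases h : t₁ = 0 <;> simp [ht₀def, h, ← hvper]
  have ht₀pos : 0 < t₀ := by
    by_cases h : t₁ = 0
    · simp [ht₀def, h, hT]
    · simp only [ht₀def, if_neg h]
      exact lt_of_le_of_ne ht₁.1 (Ne.symm h)
  have hmax : ∀ x ∈ Icc 0 T, v x ≤ v t₀ := fun x hx => (hmax₁ hx).trans hvt₀.ge
  have hv'0 : v' t₀ = 0 := by
    rcases lt_or_eq_of_le ht₀mem.2 with hlt | heqT
    · have hnh : Icc 0 T ∈ 𝓝 t₀ := Icc_mem_nhds ht₀pos hlt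
      have hd : HasDerivAt v (v' t₀) t₀ := (hv t₀ ht₀mem).hasDerivAt hnh
      have hloc : IsLocalMax v t₀ := (isMaxOn_iff.mpr hmax).isLocalMax hnh
      exact hloc.hasDerivAt_eq_zero hd
    · -- t₀ = T
      have h0mem : (0:ℝ) ∈ Icc 0 T := left_mem_Icc.2 hT.le
      have hTmem : T ∈ Icc 0 T := right_mem_Icc.2 hT.le
      have h00 : v t₀ = v 0 := by rw [heqT]; exact hvper.symm
      have hmax0 : IsMaxOn v (Icc 0 T) 0 :=
        isMaxOn_iff.mpr fun x hx => (hmax x hx).trans h00.le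
      have hmaxT : IsMaxOn v (Icc 0 T) T :=
        isMaxOn_iff.mpr fun x hx => (hmax x hx).trans (by rw [← heqT])
      have hlmax0 : IsLocalMaxOn v (Icc 0 T) 0 :=
        hmax0.filter_mono (le_principal_iff.mpr self_mem_nhdsWithin)
      have hlmaxT : IsLocalMaxOn v (Icc 0 T) T :=
        hmaxT.filter_mono (le_principal_iff.mpr self_mem_nhdsWithin)
      have hcone1 : T ∈ posTangentConeAt (Icc 0 T) 0 := by
        apply mem_posTangentConeAt_of_segment_subset
        rw [zero_add, segment_eq_Icc hT.le]
      have hcone2 : -T ∈ posTangentConeAt (Icc 0 T) T := by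
        apply mem_posTangentConeAt_of_segment_subset
        rw [add_neg_cancel, segment_symm, segment_eq_Icc hT.le]
      have h1 := hlmax0.hasFDerivWithinAt_nonpos (hv 0 h0mem).hasFDerivWithinAt hcone1
      have h2 := hlmaxT.hasFDerivWithinAt_nonpos (hv T hTmem).hasFDerivWithinAt hcone2
      simp only [ContinuousLinearMap.toSpanSingleton_apply,
        smul_eq_mul] at h1 h2
      have hle0 : v' 0 ≤ 0 := by nlinarith
      have hge0 : 0 ≤ v' T := by nlinarith
      rw [heqT]
      linarith
  have hmt₀ : m t₀ = 0 := hzero t₀ ht₀mem hv'0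
  set M := v t₀ with hM
  have hMpos : 0 < M := lt_of_lt_of_le hvs (hmax s hs)
  have hvct₀ := hvc t₀ ht₀mem
  have hv'ct₀ := hv'c t₀ ht₀mem
  rw [Metric.continuousWithinAt_iff] at hvct₀ hv'ct₀
  obtain ⟨δ₁, hδ₁, hδ₁'⟩ := hvct₀ (M/2) (by positivity)
  obtain ⟨δ₂, hδ₂, hδ₂'⟩ := hv'ct₀ (M/(2*(K+1))) (by positivity)
  set δ := min δ₁ δ₂ with hδdef
  have hδpos : 0 < δ := lt_min hδ₁ hδ₂
  set a := max (t₀ - δ/2) (t₀/2) with ha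
  have hat₀ : a < t₀ := max_lt (by linarith) (by linarith)
  have ha0 : 0 < a := lt_of_lt_of_le (by linarith : (0:ℝ) < t₀/2) (le_max_right _ _)
  have hsub : Icc a t₀ ⊆ Icc 0 T := Icc_subset_Icc ha0.le ht₀mem.2
  have hdist : ∀ t ∈ Icc a t₀, dist t t₀ < δ := by
    intro t ht
    rw [Real.dist_eq, abs_of_nonpos (by linarith [ht.2])]
    have := ht.1
    have h1 : t₀ - δ/2 ≤ a := le_max_left _ _
    linarith
  have hvbig : ∀ t ∈ Icc a t₀, M/2 < v t := by
    intro t ht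
    have := hδ₁' (hsub ht) (lt_of_lt_of_le (hdist t ht) (min_le_left _ _))
    rw [Real.dist_eq] at this
    have := abs_lt.mp this
    have h2 := this.1
    simp only [← hM] at h2 ⊢
    linarith
  have hv'small : ∀ t ∈ Icc a t₀, |v' t| < M/(2*(K+1)) := by
    intro t ht
    have := hδ₂' (hsub ht) (lt_of_lt_of_le (hdist t ht) (min_le_right _ _))
    rw [Real.dist_eq, hv'0, sub_zero] at this
    exact this
  have hm'pos : ∀ t ∈ Icc a t₀, 0 < m' t := by
    intro t ht
    have h1 := hineq t (hsub ht) (by linarith [hvbig t ht])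
    have h2 := hv'small t ht
    have h3 := abs_nonneg (v' t)
    have h4 : K * |v' t| ≤ K * (M/(2*(K+1))) := mul_le_mul_of_nonneg_left h2.le hK
    have h5 : K * (M/(2*(K+1))) = M/2 - M/(2*(K+1)) := by
      field_simp; ring
    have h6 : 0 < M/(2*(K+1)) := by positivity
    linarith [hvbig t ht]
  have hmmono : StrictMonoOn m (Icc a t₀) := by
    apply strictMonoOn_of_deriv_pos (convex_Icc a t₀) (hmc.mono hsub)
    intro x hx
    rw [interior_Icc] at hx
    have hxm : x ∈ Icc 0 T := hsub (Ioo_subset_Icc_self hx)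
    have hnh : Icc 0 T ∈ 𝓝 x :=
      Icc_mem_nhds (lt_trans ha0 hx.1) (lt_of_lt_of_le hx.2 ht₀mem.2)
    rw [((hm x hxm).hasDerivAt hnh).deriv]
    exact hm'pos x (Ioo_subset_Icc_self hx)
  have hvanti : StrictAntiOn v (Icc a t₀) := by
    apply strictAntiOn_of_deriv_neg (convex_Icc a t₀) (hvc.mono hsub)
    intro x hx
    rw [interior_Icc] at hx
    have hxm : x ∈ Icc 0 T := hsub (Ioo_subset_Icc_self hx)
    have hnh : Icc 0 T ∈ 𝓝 x :=
      Icc_mem_nhds (lt_trans ha0 hx.1) (lt_of_lt_of_le hx.2 ht₀mem.2)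
    rw [((hv x hxm).hasDerivAt hnh).deriv]
    apply hsign x hxm
    have := hmmono (Ioo_subset_Icc_self hx) (right_mem_Icc.2 hat₀.le) hx.2
    linarith [hmt₀]
  have hlt : v t₀ < v a :=
    hvanti (left_mem_Icc.2 hat₀.le) (right_mem_Icc.2 hat₀.le) hat₀
  have hle := hmax a (hsub (left_mem_Icc.2 hat₀.le))
  linarith


theorem stmt10 (T : ℝ) (hT : 0 < T) (p : ℝ → ℝ)
    (hp : ContinuousOn p (Set.Icc 0 T)) (hp1 : ∀ t ∈ Set.Icc 0 T, 1 < p t)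
    (hpT : p 0 = p T)
    (f g h : ℝ → ℝ)
    (hf : ContinuousOn f (Set.Ici 0)) (hg : ContinuousOn g (Set.Ioi 0))
    (hh : ContinuousOn h (Set.Icc 0 T))
    (α β : ℝ → ℝ) (hα : IsLowerSol T p f g h α) (hβ : IsUpperSol T p f g h β)
    (hαβ : ∀ t ∈ Set.Icc 0 T, α t ≤ β t)
    (γ : ℝ → ℝ → ℝ)
    (hγ : ∀ t x, γ t x = if β t < x then β t else if x < α t then α t else x)
    (lstar : ℝ → ℝ → ℝ → ℝ)
    (hlstar : ∀ t x y, lstar t x y = h t - g (γ t x) - f (γ t x) * y + x - γ t x)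
    (u u' w' : ℝ → ℝ)
    (hu : IsC1On T u u')
    (hw : IsC1On T (fun t => phi (p t) (u' t)) w')
    (hbc : u 0 = u T) (hbc' : u' 0 = u' T)
    (heq : ∀ t ∈ Set.Icc 0 T, w' t = lstar t (u t) (u' t)) :
    ∀ t ∈ Set.Icc 0 T, α t ≤ u t ∧ u t ≤ β t := by
  obtain ⟨α', wα', hαC1, hαpos, hαwC1, hαper, hα'per, hαineq⟩ := hα
  obtain ⟨β', wβ', hβC1, hβpos, hβwC1, hβper, hβ'per, hβineq⟩ := hβ
  -- bounds on f ∘ β and f ∘ α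
  have hβc : ContinuousOn β (Icc 0 T) := fun t ht => (hβC1.1 t ht).continuousWithinAt
  have hαc : ContinuousOn α (Icc 0 T) := fun t ht => (hαC1.1 t ht).continuousWithinAt
  have hfβ : ContinuousOn (fun t => f (β t)) (Icc 0 T) :=
    hf.comp hβc fun t ht => (hβpos t ht).le
  have hfα : ContinuousOn (fun t => f (α t)) (Icc 0 T) :=
    hf.comp hαc fun t ht => (hαpos t ht).le
  obtain ⟨C₁, hC₁⟩ := isCompact_Icc.exists_bound_of_continuousOn hfβ
  obtain ⟨C₂, hC₂⟩ := isCompact_Icc.exists_bound_of_continuousOn hfα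
  set K₁ := max C₁ 0 with hK₁def
  set K₂ := max C₂ 0 with hK₂def
  have hK₁ : ∀ t ∈ Icc 0 T, |f (β t)| ≤ K₁ := fun t ht =>
    le_trans (by simpa [Real.norm_eq_abs] using hC₁ t ht) (le_max_left _ _)
  have hK₂ : ∀ t ∈ Icc 0 T, |f (α t)| ≤ K₂ := fun t ht =>
    le_trans (by simpa [Real.norm_eq_abs] using hC₂ t ht) (le_max_left _ _)
  -- upper comparison
  have hupper : ∀ t ∈ Icc 0 T, u t - β t ≤ 0 := by
    apply key T hT (fun t => u t - β t) (fun t => u' t - β' t)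
      (fun t => phi (p t) (u' t) - phi (p t) (β' t)) (fun t => w' t - wβ' t)
      (fun t ht => (hu.1 t ht).sub (hβC1.1 t ht)) (hu.2.sub hβC1.2)
      (fun t ht => (hw.1 t ht).sub (hβwC1.1 t ht))
      (by rw [hbc, hβper]) (by linarith) ?_ ?_ K₁ (le_max_right _ _) ?_
    · intro t ht hm
      by_contra hcon
      push_neg at hcon
      have := (phi_strictMono (hp1 t ht)).monotone (by linarith : β' t ≤ u' t)
      linarith
    · intro t ht hv'
      have : u' t = β' t := by linarith
      rw [this, sub_self]
    · intro t ht hpos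
      have hβu : β t < u t := by linarith
      have hγval : γ t (u t) = β t := by rw [hγ]; exact if_pos hβu
      have heqw : w' t = h t - g (β t) - f (β t) * u' t + u t - β t := by
        rw [heq t ht, hlstar, hγval]
      have hb := hβineq t ht
      have hf1 : -(f (β t)) * (u' t - β' t) ≥ -(K₁ * |u' t - β' t|) := by
        have h1 : f (β t) * (u' t - β' t) ≤ |f (β t) * (u' t - β' t)| := le_abs_self _
        have h2 : |f (β t) * (u' t - β' t)| = |f (β t)| * |u' t - β' t| := abs_mul _ _
        have h3 : |f (β t)| * |u' t - β' t| ≤ K₁ * |u' t - β' t| :=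
          mul_le_mul_of_nonneg_right (hK₁ t ht) (abs_nonneg _)
        linarith
      have : f (β t) * β' t - f (β t) * u' t = -(f (β t)) * (u' t - β' t) := by ring
      nlinarith [hf1]
  -- lower comparison
  have hlower : ∀ t ∈ Icc 0 T, α t - u t ≤ 0 := by
    apply key T hT (fun t => α t - u t) (fun t => α' t - u' t)
      (fun t => phi (p t) (α' t) - phi (p t) (u' t)) (fun t => wα' t - w' t)
      (fun t ht => (hαC1.1 t ht).sub (hu.1 t ht)) (hαC1.2.sub hu.2)
      (fun t ht => (hαwC1.1 t ht).sub (hw.1 t ht))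
      (by rw [hαper, hbc]) (by linarith) ?_ ?_ K₂ (le_max_right _ _) ?_
    · intro t ht hm
      by_contra hcon
      push_neg at hcon
      have := (phi_strictMono (hp1 t ht)).monotone (by linarith : u' t ≤ α' t)
      linarith
    · intro t ht hv'
      have : α' t = u' t := by linarith
      rw [this, sub_self]
    · intro t ht hpos
      have huα : u t < α t := by linarith
      have hγval : γ t (u t) = α t := by
        rw [hγ, if_neg (by linarith [hαβ t ht]), if_pos huα]
      have heqw : w' t = h t - g (α t) - f (α t) * u' t + u t - α t := by
        rw [heq t ht, hlstar, hγval]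
      have hb := hαineq t ht
      have hf1 : -(f (α t)) * (α' t - u' t) ≥ -(K₂ * |α' t - u' t|) := by
        have h1 : f (α t) * (α' t - u' t) ≤ |f (α t) * (α' t - u' t)| := le_abs_self _
        have h2 : |f (α t) * (α' t - u' t)| = |f (α t)| * |α' t - u' t| := abs_mul _ _
        have h3 : |f (α t)| * |α' t - u' t| ≤ K₂ * |α' t - u' t| :=
          mul_le_mul_of_nonneg_right (hK₂ t ht) (abs_nonneg _)
        linarith
      nlinarith [hf1]
  intro t ht
  have h1 := hupper t ht
  have h2 := hlower t ht
  exact ⟨by linarith, by linarith⟩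
end
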